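/- Let L ∈ ℝ^{m×n} have rank r and satisfy μ₂-row incoherence: max_i ‖V_Lᵀeᵢ‖₂ ≤ √(μ₂ r/n) where V_L is the matrix of right singular vectors. Let J ⊆ [n] with C = L(:,J) of rank r and set β = √(|J|/n)·‖(V_L(J,:))†‖₂. Then the right singular vectors V_C of C satisfy max_i ‖V_Cᵀeᵢ‖₂ ≤ β κ(L) √(μ₂ r/|J|). -/

import Mathlib

open Matrix BigOperators MeasureTheory
open scoped Matrix.Norms.L2Operator

noncomputable def specNorm {m n : ℕ} (A : Matrix (Fin m) (Fin n) ℝ) : ℝ :=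
  ‖LinearMap.toContinuousLinearMap (Matrix.toEuclideanLin A)‖

def IsMPInv {m n : ℕ} (A : Matrix (Fin m) (Fin n) ℝ) (B : Matrix (Fin n) (Fin m) ℝ) : Prop :=
  A * B * A = A ∧ B * A * B = B ∧ (A * B)ᵀ = A * B ∧ (B * A)ᵀ = B * A

noncomputable def rowNorm {m n : ℕ} (A : Matrix (Fin m) (Fin n) ℝ) (i : Fin m) : ℝ :=
  Real.sqrt (∑ j, (A i j) ^ 2)

noncomputable def entryMax {m n : ℕ} (A : Matrix (Fin m) (Fin n) ℝ) : ℝ :=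
  ⨆ i, ⨆ j, |A i j|

lemma specNorm_eq {m n : ℕ} (A : Matrix (Fin m) (Fin n) ℝ) : specNorm A = ‖A‖ := rfl

lemma specNorm_nonneg {m n : ℕ} (A : Matrix (Fin m) (Fin n) ℝ) : 0 ≤ specNorm A := by
  rw [specNorm_eq]; exact norm_nonneg _

lemma specNorm_transpose {m n : ℕ} (A : Matrix (Fin m) (Fin n) ℝ) : specNorm Aᵀ = specNorm A := by
  rw [specNorm_eq, specNorm_eq, ← Matrix.l2_opNorm_conjTranspose A]
  congr 1

lemma specNorm_mul_le {m n l : ℕ} (A : Matrix (Fin m) (Fin n) ℝ) (B : Matrix (Fin n) (Fin l) ℝ) :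
    specNorm (A * B) ≤ specNorm A * specNorm B := Matrix.l2_opNorm_mul A B

lemma specNorm_le_one {m n : ℕ} {U : Matrix (Fin m) (Fin n) ℝ} (hU : Uᵀ * U = 1) :
    specNorm U ≤ 1 := by
  have h1 : Uᴴ = Uᵀ := by congr 1
  have h2 : ‖Uᴴ * U‖ = ‖U‖ * ‖U‖ := Matrix.l2_opNorm_conjTranspose_mul_self U
  rw [h1, hU] at h2
  have h3 : ‖(1 : Matrix (Fin n) (Fin n) ℝ)‖ ≤ 1 := by
    have := Matrix.l2_opNorm_conjTranspose_mul_self (1 : Matrix (Fin n) (Fin n) ℝ)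
    rw [Matrix.conjTranspose_one, Matrix.one_mul] at this
    nlinarith [norm_nonneg (1 : Matrix (Fin n) (Fin n) ℝ)]
  rw [specNorm_eq]
  nlinarith [norm_nonneg U]

lemma rowNorm_eq {m n : ℕ} (A : Matrix (Fin m) (Fin n) ℝ) (i : Fin m) :
    rowNorm A i = ‖(EuclideanSpace.equiv (Fin n) ℝ).symm (A i)‖ := by
  rw [rowNorm, EuclideanSpace.norm_eq]
  congr 1
  apply Finset.sum_congr rfl
  intro j _
  rw [Real.norm_eq_abs, sq_abs]
  rfl

lemma rowNorm_nonneg {m n : ℕ} (A : Matrix (Fin m) (Fin n) ℝ) (i : Fin m) :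
    0 ≤ rowNorm A i := Real.sqrt_nonneg _

lemma rowNorm_mul_le {m n l : ℕ} (A : Matrix (Fin m) (Fin n) ℝ) (B : Matrix (Fin n) (Fin l) ℝ)
    (i : Fin m) : rowNorm (A * B) i ≤ specNorm B * rowNorm A i := by
  have hrow : (A * B) i = Bᵀ *ᵥ (A i) := by
    ext j; simp [Matrix.mul_apply, Matrix.mulVec, dotProduct, mul_comm]
  rw [rowNorm_eq, rowNorm_eq, hrow, ← specNorm_transpose B, specNorm_eq]
  exact Matrix.l2_opNorm_mulVec Bᵀ ((EuclideanSpace.equiv (Fin n) ℝ).symm (A i))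

lemma mul_cancel_right {a b p : ℕ} {P : Matrix (Fin a) (Fin b) ℝ} {Q : Matrix (Fin b) (Fin a) ℝ}
    (h : P * Q = 1) (X : Matrix (Fin p) (Fin a) ℝ) : X * P * Q = X := by
  rw [Matrix.mul_assoc, h, Matrix.mul_one]

set_option maxHeartbeats 1000000 in
theorem stmt19 (m n r k : ℕ) (μ₂ : ℝ)
    (L : Matrix (Fin m) (Fin n) ℝ)
    (W : Matrix (Fin m) (Fin r) ℝ) (σ : Fin r → ℝ) (V : Matrix (Fin n) (Fin r) ℝ)
    (hW : Wᵀ * W = 1) (hV : Vᵀ * V = 1) (hσ : ∀ i, 0 < σ i)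
    (hL : L = W * Matrix.diagonal σ * Vᵀ)
    (hrank : L.rank = r)
    (hinc : ∀ i, rowNorm V i ≤ Real.sqrt (μ₂ * r / n))
    (g : Fin k → Fin n) (hg : Function.Injective g)
    (C : Matrix (Fin m) (Fin k) ℝ) (hC : C = L.submatrix id g)
    (hCrank : C.rank = r)
    (WC : Matrix (Fin m) (Fin r) ℝ) (σC : Fin r → ℝ) (VC : Matrix (Fin k) (Fin r) ℝ)
    (hWC : WCᵀ * WC = 1) (hVC : VCᵀ * VC = 1) (hσC : ∀ i, 0 < σC i)
    (hCSVD : C = WC * Matrix.diagonal σC * VCᵀ)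
    (Ld : Matrix (Fin n) (Fin m) ℝ) (hLd : IsMPInv L Ld)
    (VJd : Matrix (Fin r) (Fin k) ℝ) (hVJd : IsMPInv (V.submatrix g id) VJd)
    (β : ℝ) (hβ : β = Real.sqrt ((k : ℝ) / n) * specNorm VJd) :
    ∀ i, rowNorm VC i ≤ β * (specNorm L * specNorm Ld) * Real.sqrt (μ₂ * r / k) := by
  intro i
  -- trivial case r = 0
  rcases Nat.eq_zero_or_pos r with hr | hr
  · subst hr
    have h1 : rowNorm VC i = 0 := by simp [rowNorm]
    have h2 : (μ₂ * (0 : ℕ) / k : ℝ) = 0 := by simp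
    rw [h1, h2, Real.sqrt_zero, mul_zero]
  -- notation
  set VJ : Matrix (Fin k) (Fin r) ℝ := V.submatrix g id with hVJ
  set Sm : Matrix (Fin r) (Fin r) ℝ := Matrix.diagonal σ with hSm
  set SC : Matrix (Fin r) (Fin r) ℝ := Matrix.diagonal σC with hSC
  set SCi : Matrix (Fin r) (Fin r) ℝ := Matrix.diagonal (fun i => (σC i)⁻¹) with hSCi
  have hSCc : SC * SCi = 1 := by
    rw [hSC, hSCi, Matrix.diagonal_mul_diagonal]
    ext a b
    by_cases h : a = b <;>
      simp [h, Matrix.diagonal_apply, Matrix.one_apply, mul_inv_cancel₀ (hσC b).ne']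
  -- C = W Σ VJᵀ
  have hCW : C = W * Sm * VJᵀ := by
    rw [hC, hL, Matrix.submatrix_mul (W * Sm) Vᵀ id id g Function.bijective_id,
      Matrix.submatrix_id_id, ← Matrix.transpose_submatrix, hVJ]
  have hCT : Cᵀ = VJ * Sm * Wᵀ := by
    rw [hCW]
    simp only [Matrix.transpose_mul, Matrix.transpose_transpose, Matrix.diagonal_transpose,
      ← Matrix.mul_assoc, hSm]
  -- VC = VJ * M
  have h1 : Cᵀ * WC * SCi = VC := by
    rw [hCSVD]
    simp only [Matrix.transpose_mul, Matrix.transpose_transpose, Matrix.diagonal_transpose,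
      ← Matrix.mul_assoc, hSC]
    rw [mul_cancel_right hWC, mul_cancel_right hSCc]
  set M : Matrix (Fin r) (Fin r) ℝ := Sm * Wᵀ * WC * SCi with hMdef
  have hVCeq : VC = VJ * M := by
    rw [← h1, hCT, hMdef]
    simp only [← Matrix.mul_assoc]
  -- M has left inverse Mᵀ VJᵀ VJ, hence also right inverse
  have hMEM : (Mᵀ * VJᵀ * VJ) * M = 1 := by
    have h2 := hVC
    rw [hVCeq] at h2
    simp only [Matrix.transpose_mul, ← Matrix.mul_assoc] at h2
    simpa only [← Matrix.mul_assoc] using h2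
  have hMM : M * (Mᵀ * VJᵀ * VJ) = 1 := mul_eq_one_comm.mp hMEM
  have hF : M * Mᵀ * VJᵀ * VJ = 1 := by
    simpa only [← Matrix.mul_assoc] using hMM
  -- VJd * VJ = 1
  have hP : VJd * VJ = 1 := by
    have h5 := congrArg (fun X => M * Mᵀ * VJᵀ * X) hVJd.1
    simp only [← Matrix.mul_assoc] at h5
    rw [hF] at h5
    rwa [Matrix.one_mul] at h5
  have hM : M = VJd * VC := by
    rw [hVCeq, ← Matrix.mul_assoc, hP, Matrix.one_mul]
  -- norm of M
  have hMnorm : specNorm M ≤ specNorm VJd := by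
    calc specNorm M = specNorm (VJd * VC) := by rw [hM]
    _ ≤ specNorm VJd * specNorm VC := specNorm_mul_le _ _
    _ ≤ specNorm VJd * 1 := by
        exact mul_le_mul_of_nonneg_left (specNorm_le_one hVC) (specNorm_nonneg _)
    _ = specNorm VJd := mul_one _
  -- condition number at least one
  have hLne : L ≠ 0 := by
    intro h0
    have hd : Sm = Wᵀ * L * V := by
      rw [hL]
      simp only [← Matrix.mul_assoc]
      rw [hW, Matrix.one_mul, mul_cancel_right hV]
    rw [h0, Matrix.mul_zero, Matrix.zero_mul] at hd
    have : σ ⟨0, hr⟩ = 0 := by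
      have := congrFun (congrFun hd ⟨0, hr⟩) ⟨0, hr⟩
      simpa [hSm] using this
    exact (hσ ⟨0, hr⟩).ne' this
  have hLpos : 0 < specNorm L := by
    rcases lt_or_eq_of_le (specNorm_nonneg L) with h | h
    · exact h
    · exfalso; apply hLne
      have : ‖L‖ = 0 := by rw [← specNorm_eq, ← h]
      exact norm_eq_zero.mp this
  have hκ : 1 ≤ specNorm L * specNorm Ld := by
    have h6 : specNorm L ≤ specNorm L * specNorm Ld * specNorm L := by
      calc specNorm L = specNorm (L * Ld * L) := by rw [hLd.1]
      _ ≤ specNorm (L * Ld) * specNorm L := specNorm_mul_le _ _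
      _ ≤ specNorm L * specNorm Ld * specNorm L := by
          exact mul_le_mul_of_nonneg_right (specNorm_mul_le _ _) (specNorm_nonneg _)
    nlinarith [specNorm_nonneg Ld]
  -- incoherence of VJ rows
  have hVJrow : rowNorm VJ i = rowNorm V (g i) := by
    simp [rowNorm, hVJ, Matrix.submatrix_apply]
  -- sqrt split
  have hk : (0 : ℝ) < k := by exact_mod_cast i.pos
  have hk0 : (k : ℝ) ≠ 0 := ne_of_gt hk
  have hsplit : Real.sqrt (μ₂ * r / n) = Real.sqrt ((k : ℝ) / n) * Real.sqrt (μ₂ * r / k) := by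
    rw [← Real.sqrt_mul (by positivity : (0:ℝ) ≤ (k : ℝ) / n)]
    congr 1
    field_simp
  have hs0 : 0 ≤ Real.sqrt (μ₂ * r / k) := Real.sqrt_nonneg _
  have hβ0 : 0 ≤ β := by
    rw [hβ]; exact mul_nonneg (Real.sqrt_nonneg _) (specNorm_nonneg _)
  -- main chain
  have main : rowNorm VC i ≤ β * Real.sqrt (μ₂ * r / k) := by
    calc rowNorm VC i = rowNorm (VJ * M) i := by rw [hVCeq]
    _ ≤ specNorm M * rowNorm VJ i := rowNorm_mul_le _ _ _
    _ ≤ specNorm VJd * Real.sqrt (μ₂ * r / n) := by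
        apply mul_le_mul hMnorm _ (rowNorm_nonneg _ _) (specNorm_nonneg _)
        rw [hVJrow]; exact hinc (g i)
    _ = specNorm VJd * (Real.sqrt ((k : ℝ) / n) * Real.sqrt (μ₂ * r / k)) := by rw [hsplit]
    _ = β * Real.sqrt (μ₂ * r / k) := by rw [hβ]; ring
  calc rowNorm VC i ≤ β * Real.sqrt (μ₂ * r / k) := main
  _ ≤ β * (specNorm L * specNorm Ld) * Real.sqrt (μ₂ * r / k) := by
      nlinarith [mul_nonneg (mul_nonneg hβ0 hs0) (sub_nonneg.mpr hκ)]
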